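/- Let θ̂_u and θ̂_b be square-integrable real-valued random variables on a probability space with E[θ̂_u] = θ₀, Var(θ̂_u) = σ_u² > 0, Var(θ̂_b) = σ_b², Cov(θ̂_u, θ̂_b) = σ_bu, and σ_u² + σ_b² − 2σ_bu > 0. Define λ̂ = (σ_u² − σ_bu)/((θ̂_u − θ̂_b)² + σ_u² + σ_b² − 2σ_bu) and θ̂_λ̂ = λ̂·θ̂_b + (1 − λ̂)·θ̂_u. Then E[(θ̂_λ̂ − θ₀)²] ≤ σ_u² + |σ_u² − σ_bu|·σ_u/√(σ_u² + σ_b² − 2σ_bu) + (σ_u² − σ_bu)²/(4·(σ_u² + σ_b² − 2σ_bu)). -/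

import Mathlib

open MeasureTheory ProbabilityTheory Filter

lemma ptwise (a v u d : ℝ) (hv : 0 < v) :
    (u - a / (d ^ 2 + v) * d) ^ 2 ≤ u ^ 2 + |a| * |u| / Real.sqrt v + a ^ 2 / (4 * v) := by
  have hs : 0 < Real.sqrt v := Real.sqrt_pos.2 hv
  have hsv : Real.sqrt v ^ 2 = v := Real.sq_sqrt hv.le
  have hD : 0 < d ^ 2 + v := by positivity
  have h1 : 2 * |d| * Real.sqrt v ≤ d ^ 2 + v := by
    nlinarith [sq_nonneg (|d| - Real.sqrt v), sq_abs d]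
  have h2 : d ^ 2 / (d ^ 2 + v) ^ 2 ≤ 1 / (4 * v) := by
    rw [div_le_div_iff₀ (by positivity) (by positivity)]
    nlinarith [sq_nonneg (d ^ 2 - v)]
  have h3 : |d| / (d ^ 2 + v) ≤ 1 / (2 * Real.sqrt v) := by
    rw [div_le_div_iff₀ hD (by positivity)]
    nlinarith [h1]
  have hx : a / (d ^ 2 + v) * d = a * d / (d ^ 2 + v) := by ring
  set x := a * d / (d ^ 2 + v) with hxdef
  have habsx : |x| = |a| * (|d| / (d ^ 2 + v)) := by
    rw [hxdef, abs_div, abs_mul, abs_of_pos hD]; ring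
  have hx2 : x ^ 2 = a ^ 2 * (d ^ 2 / (d ^ 2 + v) ^ 2) := by
    rw [hxdef, div_pow, mul_pow]; ring
  have key : (u - x) ^ 2 ≤ u ^ 2 + 2 * |x| * |u| + x ^ 2 := by
    nlinarith [neg_abs_le (x * u), abs_mul x u, sq_nonneg (u - x)]
  rw [hx]
  refine key.trans ?_
  have t2 : 2 * |x| * |u| ≤ |a| * |u| / Real.sqrt v := by
    rw [habsx]
    calc 2 * (|a| * (|d| / (d ^ 2 + v))) * |u| ≤ 2 * (|a| * (1 / (2 * Real.sqrt v))) * |u| := by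
          gcongr
      _ = |a| * |u| / Real.sqrt v := by field_simp
  have t3 : x ^ 2 ≤ a ^ 2 / (4 * v) := by
    rw [hx2]
    calc a ^ 2 * (d ^ 2 / (d ^ 2 + v) ^ 2) ≤ a ^ 2 * (1 / (4 * v)) := by gcongr
      _ = a ^ 2 / (4 * v) := by ring
  linarith

/-- Bound on the MSE of the combination estimator (known variances/covariance), raw form:
`E[(θ̂_λ̂ − θ₀)²] ≤ σ_u² + |σ_u² − σ_bu|·σ_u/√(σ_u² + σ_b² − 2σ_bu)
  + (σ_u² − σ_bu)²/(4·(σ_u² + σ_b² − 2σ_bu))`. -/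
theorem mse_bound_cov_raw
    {Ω : Type*} [MeasurableSpace Ω] (P : Measure Ω) [IsProbabilityMeasure P]
    (θu θb : Ω → ℝ) (θ₀ σu2 σb2 σbu : ℝ)
    (hθu : MemLp θu 2 P) (hθb : MemLp θb 2 P)
    (hEu : ∫ ω, θu ω ∂P = θ₀)
    (hVu : variance θu P = σu2) (hσu2pos : 0 < σu2)
    (hVb : variance θb P = σb2)
    (hCov : ∫ ω, (θu ω - θ₀) * (θb ω - ∫ x, θb x ∂P) ∂P = σbu)
    (hv : σu2 + σb2 - 2 * σbu > 0) :
    ∫ ω, (((σu2 - σbu) / ((θu ω - θb ω) ^ 2 + σu2 + σb2 - 2 * σbu)) * θb ω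
        + (1 - (σu2 - σbu) / ((θu ω - θb ω) ^ 2 + σu2 + σb2 - 2 * σbu)) * θu ω
        - θ₀) ^ 2 ∂P
      ≤ σu2 + |σu2 - σbu| * Real.sqrt σu2 / Real.sqrt (σu2 + σb2 - 2 * σbu)
        + (σu2 - σbu) ^ 2 / (4 * (σu2 + σb2 - 2 * σbu)) := by
  set a := σu2 - σbu with ha
  set v := σu2 + σb2 - 2 * σbu with hvdef
  have hu2 : MemLp (fun ω => θu ω - θ₀) 2 P := hθu.sub (memLp_const θ₀)
  -- ∫ (θu - θ₀)^2 = σu2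
  have hintu2 : ∫ ω, (θu ω - θ₀) ^ 2 ∂P = σu2 := by
    have := variance_eq_integral hθu.aemeasurable
    rw [hEu] at this
    rw [← hVu, this]
  have hIu2 : Integrable (fun ω => (θu ω - θ₀) ^ 2) P := by
    have := hu2.integrable_sq
    simpa using this
  have hIau : Integrable (fun ω => |θu ω - θ₀|) P := (hu2.integrable one_le_two).abs
  -- ∫ |θu - θ₀| ≤ √σu2
  have habs : ∫ ω, |θu ω - θ₀| ∂P ≤ Real.sqrt σu2 := by
    have hmem : MemLp (fun ω => |θu ω - θ₀|) 2 P := hu2.abs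
    have h1 : variance (fun ω => |θu ω - θ₀|) P =
        (∫ ω, |θu ω - θ₀| ^ 2 ∂P) - (∫ ω, |θu ω - θ₀| ∂P) ^ 2 := by
      rw [variance_eq_sub hmem]; rfl
    have h2 : (∫ ω, |θu ω - θ₀| ∂P) ^ 2 ≤ σu2 := by
      have hn := variance_nonneg (fun ω => |θu ω - θ₀|) P
      rw [h1] at hn
      have : ∫ ω, |θu ω - θ₀| ^ 2 ∂P = σu2 := by
        rw [← hintu2]; congr 1; ext ω; rw [sq_abs]
      linarith [this ▸ hn]
    have h3 : 0 ≤ ∫ ω, |θu ω - θ₀| ∂P := integral_nonneg fun ω => abs_nonneg _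
    nlinarith [Real.sq_sqrt hσu2pos.le, Real.sqrt_nonneg σu2]
  set c := |a| / Real.sqrt v with hc
  have hcnn : 0 ≤ c := by positivity
  have hg : Integrable (fun ω => (θu ω - θ₀) ^ 2 + c * |θu ω - θ₀| + a ^ 2 / (4 * v)) P :=
    (hIu2.add (hIau.const_mul c)).add (integrable_const _)
  have hmono : ∫ ω, (((σu2 - σbu) / ((θu ω - θb ω) ^ 2 + σu2 + σb2 - 2 * σbu)) * θb ω
        + (1 - (σu2 - σbu) / ((θu ω - θb ω) ^ 2 + σu2 + σb2 - 2 * σbu)) * θu ω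
        - θ₀) ^ 2 ∂P
      ≤ ∫ ω, ((θu ω - θ₀) ^ 2 + c * |θu ω - θ₀| + a ^ 2 / (4 * v)) ∂P := by
    apply integral_mono_of_nonneg (ae_of_all _ fun ω => sq_nonneg _) hg
    refine ae_of_all _ fun ω => ?_
    have hrw : ((σu2 - σbu) / ((θu ω - θb ω) ^ 2 + σu2 + σb2 - 2 * σbu)) * θb ω
        + (1 - (σu2 - σbu) / ((θu ω - θb ω) ^ 2 + σu2 + σb2 - 2 * σbu)) * θu ω - θ₀
        = (θu ω - θ₀) - a / ((θu ω - θb ω) ^ 2 + v) * (θu ω - θb ω) := by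
      rw [ha, hvdef]; ring_nf
    dsimp only
    rw [hrw]
    have := ptwise a v (θu ω - θ₀) (θu ω - θb ω) hv
    calc ((θu ω - θ₀) - a / ((θu ω - θb ω) ^ 2 + v) * (θu ω - θb ω)) ^ 2
        ≤ (θu ω - θ₀) ^ 2 + |a| * |θu ω - θ₀| / Real.sqrt v + a ^ 2 / (4 * v) := this
      _ = (θu ω - θ₀) ^ 2 + c * |θu ω - θ₀| + a ^ 2 / (4 * v) := by rw [hc]; ring
  refine hmono.trans ?_
  have hfg : Integrable (fun ω => (θu ω - θ₀) ^ 2 + c * |θu ω - θ₀|) P :=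
    hIu2.add (hIau.const_mul c)
  have hcm : Integrable (fun ω => c * |θu ω - θ₀|) P := hIau.const_mul c
  rw [integral_add hfg (integrable_const _), integral_add hIu2 hcm, MeasureTheory.integral_const_mul,
    integral_const, hintu2]
  simp only [measure_univ, probReal_univ, smul_eq_mul, one_mul]
  have : c * ∫ ω, |θu ω - θ₀| ∂P ≤ |a| * Real.sqrt σu2 / Real.sqrt v := by
    calc c * ∫ ω, |θu ω - θ₀| ∂P ≤ c * Real.sqrt σu2 := by
          exact mul_le_mul_of_nonneg_left habs hcnn
      _ = |a| * Real.sqrt σu2 / Real.sqrt v := by rw [hc]; ring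
  linarith
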